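/- arXiv:2510.02082 — 2 statements merged into one kernel-verified Lean document; each statement's English description precedes it below -/
import Mathlib

section
/- The series whose terms are 1/( a²·c²·(a+c)² ), summed over all pairs (a,c) of positive integers with gcd(a,c) = 1, converges and its sum equals 1/3. -/
/- Stern–Brocot style tree of coprime pairs, indexed by `List Bool`. -/
namespace Stmt11Aux

def F : List Bool → ℕ × ℕ
  | [] => (1, 1)
  | true :: l => ((F l).1 + (F l).2, (F l).2)
  | false :: l => ((F l).1, (F l).1 + (F l).2)

lemma F_pos : ∀ l : List Bool, 0 < (F l).1 ∧ 0 < (F l).2 := by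
  intro l
  induction l with
  | nil => exact ⟨one_pos, one_pos⟩
  | cons b l ih =>
    cases b <;> simp [F] <;> omega

lemma F_coprime : ∀ l : List Bool, Nat.Coprime (F l).1 (F l).2 := by
  intro l
  induction l with
  | nil => exact Nat.coprime_one_left 1
  | cons b l ih =>
    cases b
    · simpa [F, Nat.coprime_add_self_right] using ih
    · simpa [F, Nat.coprime_add_self_left] using ih

lemma F_injective : Function.Injective F := by
  intro l₁
  induction l₁ with
  | nil =>
    intro l₂ h
    cases l₂ with
    | nil => rfl
    | cons b l =>
      exfalso
      have h1 := F_pos l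
      cases b <;> simp [F, Prod.ext_iff] at h <;> omega
  | cons b l ih =>
    intro l₂ h
    cases l₂ with
    | nil =>
      exfalso
      have h1 := F_pos l
      cases b <;> simp [F, Prod.ext_iff] at h <;> omega
    | cons b' l' =>
      have hp := F_pos l
      have hp' := F_pos l'
      cases b <;> cases b' <;> simp only [F, Prod.ext_iff] at h <;>
        obtain ⟨h1, h2⟩ := h
      · simp only [List.cons.injEq]
        exact ⟨trivial, ih (Prod.ext (by omega) (by omega))⟩
      · omega
      · omega
      · simp only [List.cons.injEq]
        exact ⟨trivial, ih (Prod.ext (by omega) (by omega))⟩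

lemma F_surj : ∀ n a c : ℕ, a + c ≤ n → 0 < a → 0 < c → Nat.Coprime a c →
    ∃ l, F l = (a, c) := by
  intro n
  induction n with
  | zero => intro a c h ha hc _; omega
  | succ n ih =>
    intro a c h ha hc hcop
    rcases lt_trichotomy a c with hlt | heq | hgt
    · obtain ⟨l, hl⟩ := ih a (c - a) (by omega) ha (by omega)
        (by
          have h2 := Nat.coprime_add_self_right (m := a) (n := c - a)
          rw [show c - a + a = c by omega] at h2
          exact h2.mp hcop)
      exact ⟨false :: l, by simp [F, hl]; omega⟩
    · have ha1 : a = 1 := by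
        have := hcop
        rw [← heq] at this
        simpa [Nat.Coprime] using this
      exact ⟨[], by simp [F, Prod.ext_iff]; omega⟩
    · obtain ⟨l, hl⟩ := ih (a - c) c (by omega) (by omega) hc
        (by
          have := Nat.coprime_add_self_left (m := a - c) (n := c)
          rw [show a - c + c = a by omega] at this
          exact this.mp hcop)
      exact ⟨true :: l, by simp [F, hl]; omega⟩


noncomputable def G (l : List Bool) : ℝ :=
  1 / (3 * ((F l).1 : ℝ) ^ 3 * ((F l).2 : ℝ) ^ 3)

noncomputable def fF (l : List Bool) : ℝ :=
  1 / (((F l).1 : ℝ) ^ 2 * ((F l).2 : ℝ) ^ 2 * (((F l).1 : ℝ) + ((F l).2 : ℝ)) ^ 2)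

lemma key (a c : ℝ) (ha : 0 < a) (hc : 0 < c) :
    1 / (a ^ 2 * c ^ 2 * (a + c) ^ 2)
      = 1 / (3 * a ^ 3 * c ^ 3) - 1 / (3 * (a + c) ^ 3 * c ^ 3)
        - 1 / (3 * a ^ 3 * (a + c) ^ 3) := by
  have h1 : a + c ≠ 0 := by positivity
  have h2 : a ≠ 0 := ne_of_gt ha
  have h3 : c ≠ 0 := ne_of_gt hc
  field_simp
  ring

lemma tel (l : List Bool) : fF l = G l - G (true :: l) - G (false :: l) := by
  have hp := F_pos l
  have h := key ((F l).1 : ℝ) ((F l).2 : ℝ) (by exact_mod_cast hp.1) (by exact_mod_cast hp.2)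
  simp only [fF, G, F]
  push_cast
  exact h

def D : ℕ → Finset (List Bool)
  | 0 => {[]}
  | n + 1 => (D n).image (List.cons true) ∪ (D n).image (List.cons false)

lemma length_of_mem_D : ∀ n, ∀ l ∈ D n, l.length = n := by
  intro n
  induction n with
  | zero => intro l hl; simp [D] at hl; simp [hl]
  | succ n ih =>
    intro l hl
    simp only [D, Finset.mem_union, Finset.mem_image] at hl
    rcases hl with ⟨a, ha, rfl⟩ | ⟨a, ha, rfl⟩ <;> simp [ih a ha]

lemma mem_D_length : ∀ l : List Bool, l ∈ D l.length := by
  intro l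
  induction l with
  | nil => simp [D]
  | cons b l ih =>
    cases b <;> simp only [List.length_cons, D, Finset.mem_union, Finset.mem_image]
    · exact Or.inr ⟨l, ih, rfl⟩
    · exact Or.inl ⟨l, ih, rfl⟩

lemma sum_D_succ (g : List Bool → ℝ) (n : ℕ) :
    ∑ l ∈ D (n + 1), g l = ∑ l ∈ D n, (g (true :: l) + g (false :: l)) := by
  have hdisj : Disjoint ((D n).image (List.cons true)) ((D n).image (List.cons false)) := by
    rw [Finset.disjoint_left]
    rintro a ha hb
    simp only [Finset.mem_image] at ha hb
    obtain ⟨x, _, rfl⟩ := ha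
    obtain ⟨y, _, hy⟩ := hb
    exact absurd (List.head_eq_of_cons_eq hy) (by simp)
  rw [show D (n + 1) = (D n).image (List.cons true) ∪ (D n).image (List.cons false) from rfl,
    Finset.sum_union hdisj,
    Finset.sum_image (fun a _ b _ h => by simpa using List.tail_eq_of_cons_eq h),
    Finset.sum_image (fun a _ b _ h => by simpa using List.tail_eq_of_cons_eq h),
    ← Finset.sum_add_distrib]

def B (n : ℕ) : Finset (List Bool) := (Finset.range n).biUnion D

lemma B_succ (n : ℕ) : B (n + 1) = B n ∪ D n := by
  rw [B, Finset.range_add_one, Finset.biUnion_insert]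
  exact Finset.union_comm _ _

lemma disj_B_D (n : ℕ) : Disjoint (B n) (D n) := by
  rw [Finset.disjoint_left]
  intro l hl hl'
  rw [B, Finset.mem_biUnion] at hl
  obtain ⟨k, hk, hlk⟩ := hl
  have := length_of_mem_D k l hlk
  have := length_of_mem_D n l hl'
  simp only [Finset.mem_range] at hk
  omega

lemma sum_B_succ (g : List Bool → ℝ) (n : ℕ) :
    ∑ l ∈ B (n + 1), g l = ∑ l ∈ B n, g l + ∑ l ∈ D n, g l := by
  rw [B_succ, Finset.sum_union (disj_B_D n)]

lemma sum_B_fF (n : ℕ) : ∑ l ∈ B n, fF l = G [] - ∑ l ∈ D n, G l := by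
  induction n with
  | zero => simp [B, D]
  | succ n ih =>
    rw [sum_B_succ, ih, sum_D_succ G n]
    have : ∑ l ∈ D n, fF l = ∑ l ∈ D n, (G l - (G (true :: l) + G (false :: l))) := by
      refine Finset.sum_congr rfl fun l _ => ?_
      rw [tel l]; ring
    rw [this, Finset.sum_sub_distrib]
    ring

lemma summable_aux : Summable (fun p : ℕ × ℕ => 1 / ((p.1 : ℝ) ^ 3 * (p.2 : ℝ) ^ 3)) := by
  have h : Summable (fun n : ℕ => 1 / (n : ℝ) ^ 3) :=
    Real.summable_one_div_nat_pow.mpr (by norm_num)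
  have h2 := h.mul_of_nonneg h (fun n => by positivity) (fun n => by positivity)
  exact h2.congr fun p => one_div_mul_one_div _ _

lemma summable_G : Summable G := by
  have h := (summable_aux.comp_injective F_injective).mul_left (1 / 3 : ℝ)
  refine h.congr fun l => ?_
  show 1 / 3 * (1 / (((F l).1 : ℝ) ^ 3 * ((F l).2 : ℝ) ^ 3)) = G l
  rw [G, div_mul_div_comm, one_mul, ← mul_assoc]

lemma bound (a c : ℝ) (ha : 1 ≤ a) (hc : 1 ≤ c) :
    1 / (a ^ 2 * c ^ 2 * (a + c) ^ 2) ≤ 3 * (1 / (3 * a ^ 3 * c ^ 3)) := by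
  have ha0 : (0 : ℝ) < a := lt_of_lt_of_le one_pos ha
  have hc0 : (0 : ℝ) < c := lt_of_lt_of_le one_pos hc
  have h3 : 3 * (1 / (3 * a ^ 3 * c ^ 3)) = 1 / (a ^ 3 * c ^ 3) := by
    rw [mul_assoc, mul_one_div]
    field_simp
  rw [h3]
  apply one_div_le_one_div_of_le
  · positivity
  · nlinarith [mul_pos (mul_pos ha0 ha0) (mul_pos hc0 hc0),
      mul_nonneg (mul_nonneg (sq_nonneg a) (sq_nonneg c))
        (by positivity : (0:ℝ) ≤ a ^ 2 + a * c + c ^ 2)]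

lemma summable_fF : Summable fF := by
  refine Summable.of_nonneg_of_le (fun l => by rw [fF]; positivity) (fun l => ?_)
    (summable_G.mul_left 3)
  have hp := F_pos l
  have ha1 : (1 : ℝ) ≤ ((F l).1 : ℝ) := by exact_mod_cast hp.1
  have hc1 : (1 : ℝ) ≤ ((F l).2 : ℝ) := by exact_mod_cast hp.2
  have hb := bound _ _ ha1 hc1
  rw [fF, G]
  exact hb

lemma B_mono : Monotone B := fun m n h =>
  Finset.biUnion_subset_biUnion_of_subset_left D (Finset.range_subset_range.mpr h)

lemma B_exhaust (l : List Bool) : ∃ n, l ∈ B n := by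
  refine ⟨l.length + 1, ?_⟩
  rw [B, Finset.mem_biUnion]
  exact ⟨l.length, Finset.self_mem_range_succ _, mem_D_length l⟩

lemma tendsto_sum_B (g : List Bool → ℝ) (hg : Summable g) :
    Filter.Tendsto (fun n => ∑ l ∈ B n, g l) Filter.atTop (nhds (∑' l, g l)) :=
  hg.hasSum.comp (Filter.tendsto_atTop_finset_of_monotone B_mono fun l => B_exhaust l)

lemma tendsto_boundary : Filter.Tendsto (fun n => ∑ l ∈ D n, G l) Filter.atTop (nhds 0) := by
  have h1 := tendsto_sum_B G summable_G
  have h2 : Filter.Tendsto (fun n => ∑ l ∈ B (n + 1), G l) Filter.atTop (nhds (∑' l, G l)) :=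
    h1.comp (Filter.tendsto_add_atTop_nat 1)
  have := h2.sub h1
  rw [sub_self] at this
  refine this.congr fun n => ?_
  rw [sum_B_succ]; ring

lemma hasSum_fF : HasSum fF (1 / 3) := by
  have h1 := tendsto_sum_B fF summable_fF
  have h2 : Filter.Tendsto (fun n => ∑ l ∈ B n, fF l) Filter.atTop (nhds (1 / 3)) := by
    have h3 := (tendsto_const_nhds (x := G []) (α := ℕ)).sub tendsto_boundary
    rw [sub_zero] at h3
    have h4 := h3.congr fun n => (sum_B_fF n).symm
    have hG : G [] = 1 / 3 := by norm_num [G, F]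
    rwa [hG] at h4
  have := tendsto_nhds_unique h1 h2
  rw [← this]
  exact summable_fF.hasSum

noncomputable def e : List Bool ≃ {p : ℤ × ℤ // 0 < p.1 ∧ 0 < p.2 ∧ IsCoprime p.1 p.2} := by
  refine Equiv.ofBijective
    (fun l => ⟨(((F l).1 : ℤ), ((F l).2 : ℤ)), ?_, ?_, ?_⟩) ⟨?_, ?_⟩
  · show (0 : ℤ) < ((F l).1 : ℤ); exact_mod_cast (F_pos l).1
  · show (0 : ℤ) < ((F l).2 : ℤ); exact_mod_cast (F_pos l).2
  · exact (F_coprime l).isCoprime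
  · intro l₁ l₂ h
    apply F_injective
    simp only [Subtype.mk_eq_mk, Prod.ext_iff] at h
    exact Prod.ext (by exact_mod_cast h.1) (by exact_mod_cast h.2)
  · rintro ⟨⟨x, y⟩, hx, hy, hxy⟩
    obtain ⟨a, rfl⟩ : ∃ a : ℕ, x = (a : ℤ) := ⟨x.toNat, (Int.toNat_of_nonneg hx.le).symm⟩
    obtain ⟨c, rfl⟩ : ∃ c : ℕ, y = (c : ℤ) := ⟨y.toNat, (Int.toNat_of_nonneg hy.le).symm⟩
    have hx' : 0 < a := by exact_mod_cast (show (0:ℤ) < (a:ℤ) from hx)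
    have hy' : 0 < c := by exact_mod_cast (show (0:ℤ) < (c:ℤ) from hy)
    obtain ⟨l, hl⟩ := F_surj (a + c) a c le_rfl hx' hy'
      (Nat.isCoprime_iff_coprime.mp hxy)
    exact ⟨l, by simp [hl]⟩

end Stmt11Aux


theorem stmt_11 :
    HasSum
      (fun p : {p : ℤ × ℤ // 0 < p.1 ∧ 0 < p.2 ∧ IsCoprime p.1 p.2} =>
        1 / ((p.val.1 : ℝ) ^ 2 * (p.val.2 : ℝ) ^ 2 *
          ((p.val.1 : ℝ) + (p.val.2 : ℝ)) ^ 2))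
      (1 / 3) := by
  have h := Stmt11Aux.hasSum_fF
  have he : (fun p : {p : ℤ × ℤ // 0 < p.1 ∧ 0 < p.2 ∧ IsCoprime p.1 p.2} =>
        1 / ((p.val.1 : ℝ) ^ 2 * (p.val.2 : ℝ) ^ 2 *
          ((p.val.1 : ℝ) + (p.val.2 : ℝ)) ^ 2)) ∘ Stmt11Aux.e = Stmt11Aux.fF := by
    funext l
    show 1 / ((((Stmt11Aux.F l).1 : ℤ) : ℝ) ^ 2 * (((Stmt11Aux.F l).2 : ℤ) : ℝ) ^ 2 *
      ((((Stmt11Aux.F l).1 : ℤ) : ℝ) + (((Stmt11Aux.F l).2 : ℤ) : ℝ)) ^ 2) = Stmt11Aux.fF l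
    simp only [Function.comp_apply, Stmt11Aux.e, Equiv.ofBijective_apply, Stmt11Aux.fF]
    push_cast
    ring
  exact (Equiv.hasSum_iff Stmt11Aux.e).mp (he ▸ h)
end

section
/- Let γ denote the Euler–Mascheroni constant. The series whose terms are 1/( a·b·c·d·(a+c)·(b+d) ), summed over all quadruples (a,b,c,d) of positive integers with b·c − a·d = 1 and c ≤ d, converges and its sum equals 2γ − 1; equivalently, γ = 1/2 + (1/2)·∑ 1/( a·b·c·d·(a+c)·(b+d) ) over this index set. (This is Hata's Farey-fraction series for γ: the index set is exactly the set of pairs of consecutive Farey fractions (a/b, c/d) with 0 ≤ a/b < c/d ≤ 1 and a·d − b·c = −1, excluding the pairs (0/1, 1/n).) -/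
open Real intervalIntegral

lemma log_le_trapezoid {x : ℝ} (hx : 0 < x) :
    Real.log ((x+1)/x) ≤ (2*x+1)/(2*x*(x+1)) := by
  have hx1 : (0:ℝ) < x + 1 := by linarith
  have h0 : (0:ℝ) ∉ Set.uIcc x (x+1) := by
    rw [Set.uIcc_of_le (by linarith)]
    rintro ⟨h1, h2⟩
    linarith
  have key : ∫ u in x..(x+1), u⁻¹ = Real.log ((x+1)/x) := integral_inv h0
  set c0 : ℝ := (x+1)/x - x/(x+1) with hc0
  set c1 : ℝ := 1/(x+1) - 1/x with hc1
  have hint : ∫ u in x..(x+1), (c0 + c1 * u) = c0 + c1 * (2*x+1)/2 := by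
    rw [intervalIntegral.integral_add (intervalIntegrable_const)
      ((intervalIntegral.intervalIntegrable_id).const_mul c1)]
    rw [intervalIntegral.integral_const, intervalIntegral.integral_const_mul, integral_id]
    simp only [smul_eq_mul]
    field_simp
    ring
  have hmono : ∫ u in x..(x+1), u⁻¹ ≤ ∫ u in x..(x+1), (c0 + c1 * u) := by
    apply intervalIntegral.integral_mono_on (by linarith)
    · apply ContinuousOn.intervalIntegrable
      apply ContinuousOn.inv₀ continuousOn_id
      intro u hu
      rw [Set.uIcc_of_le (by linarith)] at hu
      exact ne_of_gt (lt_of_lt_of_le hx hu.1)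
    · exact (continuous_const.add (continuous_const.mul continuous_id)).intervalIntegrable _ _
    · intro u hu
      obtain ⟨hu1, hu2⟩ := hu
      have hu0 : 0 < u := lt_of_lt_of_le hx hu1
      rw [inv_eq_one_div, div_le_iff₀ hu0, hc0, hc1]
      have expand : ((x+1)/x - x/(x+1) + (1/(x+1) - 1/x) * u) * u - 1
          = (u - x) * (x + 1 - u) / (x * (x+1)) := by
        field_simp
        ring
      nlinarith [mul_nonneg (sub_nonneg.mpr hu1) (sub_nonneg.mpr hu2),
        mul_pos hx hx1, div_nonneg (mul_nonneg (sub_nonneg.mpr hu1) (sub_nonneg.mpr hu2))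
          (le_of_lt (mul_pos hx hx1))]
  rw [key] at hmono
  rw [hint] at hmono
  calc Real.log ((x+1)/x) ≤ c0 + c1 * (2*x+1)/2 := hmono
    _ = (2*x+1)/(2*x*(x+1)) := by rw [hc0, hc1]; field_simp; ring

lemma trapezoid_lower {x : ℝ} (hx : 0 < x) :
    1/x - 1/(2*x^2) ≤ Real.log ((x+1)/x) := by
  have hx1 : (0:ℝ) < x + 1 := by linarith
  have h0 : (0:ℝ) ∉ Set.uIcc x (x+1) := by
    rw [Set.uIcc_of_le (by linarith)]
    rintro ⟨h1, h2⟩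
    linarith
  have key : ∫ u in x..(x+1), u⁻¹ = Real.log ((x+1)/x) := integral_inv h0
  have hint : ∫ u in x..(x+1), (2/x + (-1/x^2) * u) = 2/x + (-1/x^2) * (2*x+1)/2 := by
    rw [intervalIntegral.integral_add (intervalIntegrable_const)
      ((intervalIntegral.intervalIntegrable_id).const_mul _)]
    rw [intervalIntegral.integral_const, intervalIntegral.integral_const_mul, integral_id]
    simp only [smul_eq_mul]
    field_simp
    ring
  have hmono : ∫ u in x..(x+1), (2/x + (-1/x^2) * u) ≤ ∫ u in x..(x+1), u⁻¹ := by
    apply intervalIntegral.integral_mono_on (by linarith)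
    · exact (continuous_const.add (continuous_const.mul continuous_id)).intervalIntegrable _ _
    · apply ContinuousOn.intervalIntegrable
      apply ContinuousOn.inv₀ continuousOn_id
      intro u hu
      rw [Set.uIcc_of_le (by linarith)] at hu
      exact ne_of_gt (lt_of_lt_of_le hx hu.1)
    · intro u hu
      obtain ⟨hu1, hu2⟩ := hu
      have hu0 : 0 < u := lt_of_lt_of_le hx hu1
      rw [inv_eq_one_div, le_div_iff₀ hu0]
      have hx2 : (0:ℝ) < x^2 := by positivity
      have expand : 1 - (2/x + (-1/x^2) * u) * u = (u - x)^2 / x^2 := by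
        field_simp
        ring
      nlinarith [sq_nonneg (u - x), div_nonneg (sq_nonneg (u-x)) (le_of_lt hx2)]
  rw [key] at hmono
  rw [hint] at hmono
  calc 1/x - 1/(2*x^2) = 2/x + (-1/x^2) * (2*x+1)/2 := by field_simp; ring
    _ ≤ Real.log ((x+1)/x) := hmono

noncomputable def hfun (k : ℝ) : ℝ := 1/k + 1/(k+1) - 2 * Real.log ((k+1)/k)

lemma hfun_nonneg {k : ℝ} (hk : 0 < k) : 0 ≤ hfun k := by
  have h := log_le_trapezoid hk
  have heq : (2*k+1)/(2*k*(k+1)) * 2 = 1/k + 1/(k+1) := by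
    field_simp
    ring
  rw [hfun]
  nlinarith

lemma hfun_le {k : ℝ} (hk : 0 < k) : hfun k ≤ 1/(k*k*(k+1)) := by
  have h := trapezoid_lower hk
  have heq : 1/k + 1/(k+1) - 2*(1/k - 1/(2*k^2)) = 1/(k*k*(k+1)) := by
    field_simp
    ring
  rw [hfun]
  nlinarith

lemma rat_id (A B C D : ℝ) (hA : 0 < A) (hB : 0 < B) (hC : 0 < C) (hD : 0 < D)
    (e : B*C = A*D + 1) :
    1/(A*D) + 1/(B*C) - (1/(A*(B+D)) + 1/(B*(A+C))) - (1/((A+C)*D) + 1/(C*(B+D)))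
      = 1/(A*B*C*D*(A+C)*(B+D)) := by
  have hC' : C = (A*D+1)/B := by
    field_simp
    linarith
  have hAC : 0 < A + C := by linarith
  have hBD : 0 < B + D := by linarith
  rw [hC'] at hAC ⊢
  have h1 : A + (A*D+1)/B ≠ 0 := ne_of_gt hAC
  field_simp
  ring

def H : Set (ℤ × ℤ × ℤ × ℤ) :=
  {p | 0 < p.1 ∧ 0 < p.2.1 ∧ 0 < p.2.2.1 ∧ 0 < p.2.2.2 ∧
    p.2.1 * p.2.2.1 - p.1 * p.2.2.2 = 1 ∧ p.2.2.1 ≤ p.2.2.2}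

namespace Hata

abbrev Q := ℤ × ℤ × ℤ × ℤ

def Lc (q : Q) : Q := (q.1, q.2.1, q.1 + q.2.2.1, q.2.1 + q.2.2.2)
def Rc (q : Q) : Q := (q.1 + q.2.2.1, q.2.1 + q.2.2.2, q.2.2.1, q.2.2.2)
def step (q : Q) (t : Bool) : Q := if t then Rc q else Lc q
def node (q : Q) (p : List Bool) : Q := p.foldl step q
def root (n : ℕ) : Q := (1, (n:ℤ)+2, 1, (n:ℤ)+1)

lemma memH_iff {a b c d : ℤ} : (a,b,c,d) ∈ H ↔
    0 < a ∧ 0 < b ∧ 0 < c ∧ 0 < d ∧ b*c - a*d = 1 ∧ c ≤ d := Iff.rfl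

lemma a_lt_b {a b c d : ℤ} (h : (a,b,c,d) ∈ H) : a < b := by
  obtain ⟨h1,h2,h3,h4,h5,h6⟩ := memH_iff.mp h; nlinarith

@[simp] lemma Lc_def (a b c d : ℤ) : Lc (a,b,c,d) = (a,b,a+c,b+d) := rfl
@[simp] lemma Rc_def (a b c d : ℤ) : Rc (a,b,c,d) = (a+c,b+d,c,d) := rfl

lemma memH_L {q : Q} (h : q ∈ H) : Lc q ∈ H := by
  obtain ⟨a,b,c,d⟩ := q
  have hab := a_lt_b h
  obtain ⟨h1,h2,h3,h4,h5,h6⟩ := memH_iff.mp h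
  rw [Lc_def, memH_iff]
  refine ⟨h1, h2, by omega, by omega, by nlinarith, by omega⟩

lemma memH_R {q : Q} (h : q ∈ H) : Rc q ∈ H := by
  obtain ⟨a,b,c,d⟩ := q
  obtain ⟨h1,h2,h3,h4,h5,h6⟩ := memH_iff.mp h
  rw [Rc_def, memH_iff]
  refine ⟨by omega, by omega, h3, h4, by nlinarith, h6⟩

lemma memH_step {q : Q} (h : q ∈ H) (t : Bool) : step q t ∈ H := by
  cases t
  · exact memH_L h
  · exact memH_R h

lemma node_nil (q : Q) : node q [] = q := rfl
lemma node_cons (q : Q) (t : Bool) (p : List Bool) : node q (t :: p) = node (step q t) p := rfl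
lemma node_concat (q : Q) (t : Bool) (p : List Bool) :
    node q (p ++ [t]) = step (node q p) t := by
  simp [node, List.foldl_append]

lemma memH_node {q : Q} (h : q ∈ H) (p : List Bool) : node q p ∈ H := by
  induction p generalizing q with
  | nil => exact h
  | cons t p ih => exact ih (memH_step h t)

lemma memH_root (n : ℕ) : root n ∈ H := by
  rw [root, memH_iff]
  refine ⟨one_pos, by positivity, one_pos, by positivity, by ring, by omega⟩
lemma b_ne_d {a b c d : ℤ} (h : (a,b,c,d) ∈ H) : b ≠ d := by
  obtain ⟨h1,h2,h3,h4,h5,h6⟩ := memH_iff.mp h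
  intro hbd
  subst hbd
  have h7 : b * (c - a) = 1 := by linear_combination h5
  rcases Int.mul_eq_one_iff_eq_one_or_neg_one.mp h7 with ⟨hb, hc⟩ | ⟨hb, hc⟩ <;> omega

lemma surj_aux : ∀ (m : ℕ) (q : Q), q ∈ H → (q.2.1 + q.2.2.2).natAbs ≤ m →
    ∃ n p, node (root n) p = q := by
  intro m
  induction m with
  | zero =>
    intro q hq hm
    exfalso
    obtain ⟨a,b,c,d⟩ := q
    obtain ⟨h1,h2,h3,h4,h5,h6⟩ := memH_iff.mp hq
    simp only at hm
    omega
  | succ m ih =>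
    intro q hq hm
    obtain ⟨a,b,c,d⟩ := q
    obtain ⟨h1,h2,h3,h4,h5,h6⟩ := memH_iff.mp hq
    simp only at hm
    rcases lt_trichotomy b d with hbd | hbd | hbd
    · -- left child of (a, b, c-a, d-b)
      have hab : a < b := a_lt_b hq
      have hca : a < c := by nlinarith
      have hcd : c - a ≤ d - b := by
        by_contra hcon
        push_neg at hcon
        nlinarith
      have h' : ((a, b, c-a, d-b) : Q) ∈ H :=
        memH_iff.mpr ⟨h1, h2, by omega, by omega, by linear_combination h5, hcd⟩
      obtain ⟨n, p, hnp⟩ := ih (a, b, c-a, d-b) h' (by simp only; omega)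
      refine ⟨n, p ++ [false], ?_⟩
      rw [node_concat, hnp]
      show Lc (a, b, c-a, d-b) = (a,b,c,d)
      rw [Lc_def]
      simp
    · exact absurd hbd (b_ne_d hq)
    · rcases lt_trichotomy c a with hca | hca | hca
      · -- right child of (a-c, b-d, c, d)
        have h' : ((a-c, b-d, c, d) : Q) ∈ H :=
          memH_iff.mpr ⟨by omega, by omega, h3, h4, by linear_combination h5, h6⟩
        obtain ⟨n, p, hnp⟩ := ih (a-c, b-d, c, d) h' (by simp only; omega)
        refine ⟨n, p ++ [true], ?_⟩
        rw [node_concat, hnp]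
        show Rc (a-c, b-d, c, d) = (a,b,c,d)
        rw [Rc_def]
        simp
      · -- root
        subst hca
        have h7 : c * (b - d) = 1 := by linear_combination h5
        rcases Int.mul_eq_one_iff_eq_one_or_neg_one.mp h7 with ⟨hc, hb⟩ | ⟨hc, hb⟩
        · refine ⟨(d-1).toNat, [], ?_⟩
          rw [node_nil, root]
          simp only [Prod.mk.injEq]
          omega
        · omega
      · -- impossible
        exfalso
        nlinarith


lemma step_false (q : Q) : step q false = Lc q := rfl
lemma step_true (q : Q) : step q true = Rc q := rfl

lemma shape_L {q : Q} (h : q ∈ H) : (Lc q).2.1 < (Lc q).2.2.2 := by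
  obtain ⟨a,b,c,d⟩ := q
  obtain ⟨h1,h2,h3,h4,h5,h6⟩ := memH_iff.mp h
  rw [Lc_def]
  show b < b + d
  omega

lemma shape_R {q : Q} (h : q ∈ H) :
    (Rc q).2.2.2 < (Rc q).2.1 ∧ (Rc q).2.2.1 < (Rc q).1 := by
  obtain ⟨a,b,c,d⟩ := q
  obtain ⟨h1,h2,h3,h4,h5,h6⟩ := memH_iff.mp h
  rw [Rc_def]
  exact ⟨show d < b + d by omega, show c < a + c by omega⟩

lemma shape_root (n : ℕ) :
    (root n).2.2.2 < (root n).2.1 ∧ (root n).1 = (root n).2.2.1 := by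
  rw [root]
  exact ⟨show (n:ℤ)+1 < (n:ℤ)+2 by omega, rfl⟩

lemma Lc_inj {q q' : Q} (h : Lc q = Lc q') : q = q' := by
  obtain ⟨a,b,c,d⟩ := q
  obtain ⟨a',b',c',d'⟩ := q'
  rw [Lc_def, Lc_def] at h
  simp only [Prod.mk.injEq] at h ⊢
  omega

lemma Rc_inj {q q' : Q} (h : Rc q = Rc q') : q = q' := by
  obtain ⟨a,b,c,d⟩ := q
  obtain ⟨a',b',c',d'⟩ := q'
  rw [Rc_def, Rc_def] at h
  simp only [Prod.mk.injEq] at h ⊢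
  omega

lemma node_inj : ∀ (p₁ p₂ : List Bool) (n₁ n₂ : ℕ),
    node (root n₁) p₁ = node (root n₂) p₂ → n₁ = n₂ ∧ p₁ = p₂ := by
  intro p₁
  induction p₁ using List.reverseRecOn with
  | nil =>
    intro p₂ n₁ n₂ heq
    rcases p₂.eq_nil_or_concat with rfl | ⟨p', t, rfl⟩
    · rw [node_nil, node_nil, root, root] at heq
      simp only [Prod.mk.injEq] at heq
      exact ⟨by omega, rfl⟩
    · exfalso
      rw [List.concat_eq_append, node_nil, node_concat] at heq
      have hmem : node (root n₂) p' ∈ H := memH_node (memH_root n₂) p'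
      have hroot := shape_root n₁
      cases t with
      | false =>
        have h1 := shape_L hmem
        rw [← step_false, ← heq] at h1
        omega
      | true =>
        have h1 := shape_R hmem
        rw [← step_true, ← heq] at h1
        omega
  | append_singleton p t ihp =>
    intro p₂ n₁ n₂ heq
    rcases p₂.eq_nil_or_concat with rfl | ⟨p', t', rfl⟩
    · exfalso
      rw [node_nil, node_concat] at heq
      have hmem : node (root n₁) p ∈ H := memH_node (memH_root n₁) p
      have hroot := shape_root n₂
      cases t with
      | false =>
        have h1 := shape_L hmem
        rw [← step_false, heq] at h1
        omega
      | true =>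
        have h1 := shape_R hmem
        rw [← step_true, heq] at h1
        omega
    · rw [List.concat_eq_append] at heq ⊢
      rw [node_concat, node_concat] at heq
      have hm1 : node (root n₁) p ∈ H := memH_node (memH_root n₁) p
      have hm2 : node (root n₂) p' ∈ H := memH_node (memH_root n₂) p'
      have htt : t = t' := by
        cases t with
        | false =>
          cases t' with
          | false => rfl
          | true =>
            exfalso
            have hL := shape_L hm1
            have hR := shape_R hm2
            rw [← step_false, heq, step_true] at hL
            omega
        | true =>
          cases t' with
          | true => rfl
          | false =>
            exfalso
            have hL := shape_L hm2
            have hR := shape_R hm1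
            rw [← step_false, ← heq, step_true] at hL
            omega
      subst htt
      have hqq : node (root n₁) p = node (root n₂) p' := by
        cases t with
        | false => exact Lc_inj (by rw [← step_false, ← step_false, heq])
        | true => exact Rc_inj (by rw [← step_true, ← step_true, heq])
      obtain ⟨hn, hp⟩ := ihp p' n₁ n₂ hqq
      exact ⟨hn, by rw [hp]⟩


@[simp] lemma Lc_1 (q : Q) : (Lc q).1 = q.1 := rfl
@[simp] lemma Lc_21 (q : Q) : (Lc q).2.1 = q.2.1 := rfl
@[simp] lemma Lc_221 (q : Q) : (Lc q).2.2.1 = q.1 + q.2.2.1 := rfl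
@[simp] lemma Lc_222 (q : Q) : (Lc q).2.2.2 = q.2.1 + q.2.2.2 := rfl
@[simp] lemma Rc_1 (q : Q) : (Rc q).1 = q.1 + q.2.2.1 := rfl
@[simp] lemma Rc_21 (q : Q) : (Rc q).2.1 = q.2.1 + q.2.2.2 := rfl
@[simp] lemma Rc_221 (q : Q) : (Rc q).2.2.1 = q.2.2.1 := rfl
@[simp] lemma Rc_222 (q : Q) : (Rc q).2.2.2 = q.2.2.2 := rfl

noncomputable def phi (q : Q) : ℝ := hfun ((q.1 : ℝ) * (q.2.2.2 : ℝ))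

noncomputable def F (q : Q) : ℝ :=
  1 / ((q.1 : ℝ) * (q.2.1 : ℝ) * (q.2.2.1 : ℝ) * (q.2.2.2 : ℝ) *
    ((q.1 : ℝ) + (q.2.2.1 : ℝ)) * ((q.2.1 : ℝ) + (q.2.2.2 : ℝ)))

lemma pos_comp {q : Q} (hq : q ∈ H) :
    0 < (q.1:ℝ) ∧ 0 < (q.2.1:ℝ) ∧ 0 < (q.2.2.1:ℝ) ∧ 0 < (q.2.2.2:ℝ) := by
  obtain ⟨a,b,c,d⟩ := q
  obtain ⟨h1,h2,h3,h4,h5,h6⟩ := memH_iff.mp hq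
  exact ⟨Int.cast_pos.mpr h1, Int.cast_pos.mpr h2, Int.cast_pos.mpr h3, Int.cast_pos.mpr h4⟩

lemma hBC_real {q : Q} (hq : q ∈ H) :
    (q.2.1:ℝ) * (q.2.2.1:ℝ) = (q.1:ℝ) * (q.2.2.2:ℝ) + 1 := by
  obtain ⟨a,b,c,d⟩ := q
  obtain ⟨h1,h2,h3,h4,h5,h6⟩ := memH_iff.mp hq
  have := congrArg (fun z : ℤ => (z : ℝ)) h5
  push_cast at this
  simp only
  linarith

lemma kq_pos {q : Q} (hq : q ∈ H) : 0 < (q.1:ℝ) * (q.2.2.2:ℝ) := by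
  obtain ⟨p1,p2,p3,p4⟩ := pos_comp hq
  exact mul_pos p1 p4

lemma phi_nonneg {q : Q} (hq : q ∈ H) : 0 ≤ phi q := hfun_nonneg (kq_pos hq)

lemma F_nonneg {q : Q} (hq : q ∈ H) : 0 ≤ F q := by
  obtain ⟨p1,p2,p3,p4⟩ := pos_comp hq
  have : 0 < (q.1:ℝ) * (q.2.1:ℝ) * (q.2.2.1:ℝ) * (q.2.2.2:ℝ) *
      ((q.1:ℝ) + (q.2.2.1:ℝ)) * ((q.2.1:ℝ) + (q.2.2.2:ℝ)) := by positivity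
  exact le_of_lt (div_pos one_pos this)

lemma key {q : Q} (hq : q ∈ H) : F q = phi q - phi (Lc q) - phi (Rc q) := by
  obtain ⟨a,b,c,d⟩ := q
  obtain ⟨h1,h2,h3,h4,h5,h6⟩ := memH_iff.mp hq
  set A := (a : ℝ) with hA'
  set B := (b : ℝ) with hB'
  set C := (c : ℝ) with hC'
  set D := (d : ℝ) with hD'
  have hA : 0 < A := Int.cast_pos.mpr h1
  have hB : 0 < B := Int.cast_pos.mpr h2
  have hC : 0 < C := Int.cast_pos.mpr h3
  have hD : 0 < D := Int.cast_pos.mpr h4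
  have hBC : B * C = A * D + 1 := by
    have := congrArg (fun z : ℤ => (z : ℝ)) h5
    push_cast at this
    linarith
  have hAC : (0:ℝ) < A + C := by linarith
  have hBD : (0:ℝ) < B + D := by linarith
  have hphiP : phi (a,b,c,d) = hfun (A*D) := rfl
  have hphiL : phi (Lc (a,b,c,d)) = hfun (A*(B+D)) := by
    rw [Lc_def, phi]
    congr 1
    push_cast
    try ring
  have hphiR : phi (Rc (a,b,c,d)) = hfun ((A+C)*D) := by
    rw [Rc_def, phi]
    congr 1
    push_cast
    try ring
  have hFeq : F (a,b,c,d) = 1/(A*B*C*D*(A+C)*(B+D)) := by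
    rw [F]
  rw [hphiP, hphiL, hphiR, hFeq, hfun, hfun, hfun]
  have l1 : Real.log ((A*D+1)/(A*D)) =
      Real.log B + Real.log C - (Real.log A + Real.log D) := by
    rw [show A*D+1 = B*C from hBC.symm, Real.log_div (by positivity) (by positivity),
      Real.log_mul (ne_of_gt hB) (ne_of_gt hC), Real.log_mul (ne_of_gt hA) (ne_of_gt hD)]
  have l2 : Real.log ((A*(B+D)+1)/(A*(B+D))) =
      Real.log B + Real.log (A+C) - (Real.log A + Real.log (B+D)) := by
    rw [show A*(B+D)+1 = B*(A+C) by linear_combination -hBC,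
      Real.log_div (by positivity) (by positivity),
      Real.log_mul (ne_of_gt hB) (ne_of_gt hAC), Real.log_mul (ne_of_gt hA) (ne_of_gt hBD)]
  have l3 : Real.log (((A+C)*D+1)/((A+C)*D)) =
      Real.log C + Real.log (B+D) - (Real.log (A+C) + Real.log D) := by
    rw [show (A+C)*D+1 = C*(B+D) by linear_combination -hBC,
      Real.log_div (by positivity) (by positivity),
      Real.log_mul (ne_of_gt hC) (ne_of_gt hBD), Real.log_mul (ne_of_gt hAC) (ne_of_gt hD)]
  rw [l1, l2, l3]
  rw [show A*D+1 = B*C from hBC.symm,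
    show A*(B+D)+1 = B*(A+C) by linear_combination -hBC,
    show (A+C)*D+1 = C*(B+D) by linear_combination -hBC]
  have hr := rat_id A B C D hA hB hC hD hBC
  linarith

def paths : ℕ → Finset (List Bool)
  | 0 => {[]}
  | N+1 => ((paths N).image (List.cons false)) ∪ ((paths N).image (List.cons true))

def ball : ℕ → Finset (List Bool)
  | 0 => ∅
  | N+1 => insert [] (((ball N).image (List.cons false)) ∪ ((ball N).image (List.cons true)))

lemma cons_inj (t : Bool) : Function.Injective (List.cons t) := fun x y h => by
  injection h

lemma disj_images (s s' : Finset (List Bool)) :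
    Disjoint (s.image (List.cons false)) (s'.image (List.cons true)) := by
  rw [Finset.disjoint_left]
  rintro p hp hp'
  obtain ⟨x, _, rfl⟩ := Finset.mem_image.mp hp
  obtain ⟨y, _, h⟩ := Finset.mem_image.mp hp'
  exact absurd h (by simp)

lemma nil_notmem_union (s s' : Finset (List Bool)) :
    [] ∉ (s.image (List.cons false)) ∪ (s'.image (List.cons true)) := by
  simp

lemma sum_paths_succ (f : List Bool → ℝ) (N : ℕ) :
    ∑ p ∈ paths (N+1), f p
      = (∑ p ∈ paths N, f (false :: p)) + (∑ p ∈ paths N, f (true :: p)) := by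
  rw [paths, Finset.sum_union (disj_images _ _),
    Finset.sum_image (fun x _ y _ h => cons_inj false h),
    Finset.sum_image (fun x _ y _ h => cons_inj true h)]

lemma sum_ball_succ (f : List Bool → ℝ) (N : ℕ) :
    ∑ p ∈ ball (N+1), f p
      = f [] + ((∑ p ∈ ball N, f (false :: p)) + (∑ p ∈ ball N, f (true :: p))) := by
  rw [ball, Finset.sum_insert (nil_notmem_union _ _), Finset.sum_union (disj_images _ _),
    Finset.sum_image (fun x _ y _ h => cons_inj false h),
    Finset.sum_image (fun x _ y _ h => cons_inj true h)]

lemma mem_ball_iff : ∀ (N : ℕ) (p : List Bool), p ∈ ball N ↔ p.length < N := by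
  intro N
  induction N with
  | zero => intro p; simp [ball]
  | succ N ih =>
    intro p
    cases p with
    | nil => simp [ball]
    | cons t p' =>
      simp only [ball, Finset.mem_insert, Finset.mem_union, Finset.mem_image]
      constructor
      · rintro (h | ⟨x, hx, h⟩ | ⟨x, hx, h⟩) <;>
        [exact absurd h (by simp);
         (injection h with h1 h2; subst h2; simpa using Nat.succ_lt_succ ((ih x).mp hx));
         (injection h with h1 h2; subst h2; simpa using Nat.succ_lt_succ ((ih x).mp hx))]
      · intro hlen
        have hx : p' ∈ ball N := (ih p').mpr (by simpa using hlen)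
        cases t with
        | false => exact Or.inr (Or.inl ⟨p', hx, rfl⟩)
        | true => exact Or.inr (Or.inr ⟨p', hx, rfl⟩)

lemma length_of_mem_paths : ∀ (N : ℕ) (p : List Bool), p ∈ paths N → p.length = N := by
  intro N
  induction N with
  | zero => intro p hp; simp [paths] at hp; simp [hp]
  | succ N ih =>
    intro p hp
    rw [paths, Finset.mem_union] at hp
    rcases hp with hp | hp <;>
    · obtain ⟨x, hx, rfl⟩ := Finset.mem_image.mp hp
      simp [ih x hx]

lemma tele {q : Q} (hq : q ∈ H) :
    ∀ N, (∑ p ∈ ball N, F (node q p)) + (∑ p ∈ paths N, phi (node q p)) = phi q := by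
  intro N
  induction N generalizing q with
  | zero => simp [ball, paths, node_nil]
  | succ N ih =>
    rw [sum_ball_succ, sum_paths_succ]
    simp only [node_cons, step_false, step_true, node_nil]
    have hL := ih (memH_L hq)
    have hR := ih (memH_R hq)
    have hkey := key hq
    linarith

lemma lens {q : Q} (hq : q ∈ H) :
    ∀ N, ∑ p ∈ paths N, (1:ℝ)/(((node q p).2.1:ℝ) * ((node q p).2.2.2:ℝ))
      = 1/((q.2.1:ℝ)*(q.2.2.2:ℝ)) := by
  intro N
  induction N generalizing q with
  | zero => simp [paths, node_nil]
  | succ N ih =>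
    rw [sum_paths_succ]
    simp only [node_cons, step_false, step_true]
    rw [ih (memH_L hq), ih (memH_R hq)]
    obtain ⟨p1,p2,p3,p4⟩ := pos_comp hq
    simp only [Lc_21, Lc_222, Rc_21, Rc_222]
    push_cast
    rw [div_add_div _ _ (by positivity) (by positivity)]
    rw [div_eq_div_iff (by positivity) (by positivity)]
    ring

lemma node_ge {q : Q} (hq : q ∈ H) : ∀ (p : List Bool),
    q.1 ≤ (node q p).1 ∧ q.2.2.1 ≤ (node q p).2.2.1 ∧
      q.1 * q.2.2.2 + p.length ≤ (node q p).1 * (node q p).2.2.2 := by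
  intro p
  induction p generalizing q with
  | nil => simp [node_nil]
  | cons t p ih =>
    obtain ⟨a,b,c,d⟩ := q
    obtain ⟨h1,h2,h3,h4,h5,h6⟩ := memH_iff.mp hq
    obtain ⟨i1, i2, i3⟩ := ih (memH_step hq t)
    rw [node_cons]
    cases t with
    | false =>
      rw [step_false] at i1 i2 i3 ⊢
      simp only [Lc_1, Lc_21, Lc_221, Lc_222] at i1 i2 i3
      refine ⟨i1, by simp only []; omega, ?_⟩
      have hstep : a * d + 1 ≤ a * (b + d) := by nlinarith
      have : (a * (b+d) : ℤ) + p.length ≤ (node (Lc (a,b,c,d)) p).1 * (node (Lc (a,b,c,d)) p).2.2.2 := i3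
      simp only [List.length_cons]
      push_cast
      omega
    | true =>
      rw [step_true] at i1 i2 i3 ⊢
      simp only [Rc_1, Rc_21, Rc_221, Rc_222] at i1 i2 i3
      refine ⟨by simp only []; omega, i2, ?_⟩
      have hstep : a * d + 1 ≤ (a + c) * d := by nlinarith
      simp only [List.length_cons]
      push_cast
      omega

lemma hfun_le2 {A B C D : ℝ} (hA : 0 < A) (hB : 0 < B) (hC : 0 < C) (hD : 0 < D)
    (hbc : B*C = A*D+1) :
    hfun (A*D) ≤ (1/(A*D)) * (1/(A*C)) * (1/(B*D)) := by
  have h := hfun_le (mul_pos hA hD)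
  have heq : 1/((A*D)*(A*D)*(A*D+1)) = (1/(A*D))*(1/(A*C))*(1/(B*D)) := by
    rw [← hbc]
    field_simp
  calc hfun (A*D) ≤ 1/((A*D)*(A*D)*(A*D+1)) := h
    _ = _ := heq

lemma one_le_ad {q : Q} (hq : q ∈ H) : 1 ≤ q.1 * q.2.2.2 := by
  obtain ⟨a,b,c,d⟩ := q
  obtain ⟨h1,h2,h3,h4,h5,h6⟩ := memH_iff.mp hq
  nlinarith

lemma tail_le {q : Q} (hq : q ∈ H) (N : ℕ) :
    ∑ p ∈ paths N, phi (node q p)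
      ≤ (1/((N:ℝ)+1) * (1/((q.1:ℝ)*(q.2.2.1:ℝ)))) * (1/((q.2.1:ℝ)*(q.2.2.2:ℝ))) := by
  obtain ⟨p1,p2,p3,p4⟩ := pos_comp hq
  have step1 : ∀ p ∈ paths N, phi (node q p)
      ≤ (1/((N:ℝ)+1) * (1/((q.1:ℝ)*(q.2.2.1:ℝ))))
          * ((1:ℝ)/(((node q p).2.1:ℝ)*((node q p).2.2.2:ℝ))) := by
    intro p hp
    have hmem := memH_node hq p
    obtain ⟨n1,n2,n3,n4⟩ := pos_comp hmem
    have hbc := hBC_real hmem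
    have h2 := hfun_le2 n1 n2 n3 n4 hbc
    have hphi : phi (node q p) = hfun (((node q p).1:ℝ)*((node q p).2.2.2:ℝ)) := rfl
    rw [hphi]
    refine le_trans h2 ?_
    obtain ⟨g1, g2, g3⟩ := node_ge hq p
    have hlen : p.length = N := length_of_mem_paths N p hp
    have hk : ((N:ℝ)+1) ≤ ((node q p).1:ℝ) * ((node q p).2.2.2:ℝ) := by
      have hone := one_le_ad hq
      rw [hlen] at g3
      have hint : (N:ℤ) + 1 ≤ (node q p).1 * (node q p).2.2.2 := by linarith
      exact_mod_cast hint
    have hac : (q.1:ℝ) * (q.2.2.1:ℝ) ≤ ((node q p).1:ℝ) * ((node q p).2.2.1:ℝ) := by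
      have := mul_le_mul (α := ℤ) g1 g2 (le_of_lt (by exact_mod_cast p3)) (by exact_mod_cast le_of_lt (lt_of_lt_of_le (by exact_mod_cast p1) g1))
      exact_mod_cast this
    have f1 : 1/(((node q p).1:ℝ) * ((node q p).2.2.2:ℝ)) ≤ 1/((N:ℝ)+1) :=
      one_div_le_one_div_of_le (by positivity) hk
    have f2 : 1/(((node q p).1:ℝ) * ((node q p).2.2.1:ℝ)) ≤ 1/((q.1:ℝ)*(q.2.2.1:ℝ)) :=
      one_div_le_one_div_of_le (by positivity) hac
    have f3 : (0:ℝ) ≤ 1/(((node q p).2.1:ℝ)*((node q p).2.2.2:ℝ)) := by positivity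
    have f4 : (0:ℝ) ≤ 1/(((node q p).1:ℝ) * ((node q p).2.2.1:ℝ)) := by positivity
    have f5 : (0:ℝ) ≤ 1/((N:ℝ)+1) := by positivity
    exact mul_le_mul_of_nonneg_right (mul_le_mul f1 f2 f4 f5) f3
  calc ∑ p ∈ paths N, phi (node q p)
      ≤ ∑ p ∈ paths N, (1/((N:ℝ)+1) * (1/((q.1:ℝ)*(q.2.2.1:ℝ))))
          * ((1:ℝ)/(((node q p).2.1:ℝ)*((node q p).2.2.2:ℝ))) :=
        Finset.sum_le_sum step1
    _ = (1/((N:ℝ)+1) * (1/((q.1:ℝ)*(q.2.2.1:ℝ))))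
          * ∑ p ∈ paths N, (1:ℝ)/(((node q p).2.1:ℝ)*((node q p).2.2.2:ℝ)) := by
        rw [← Finset.mul_sum]
    _ = _ := by rw [lens hq N]

open Filter in
lemma hasSum_fiber {q : Q} (hq : q ∈ H) :
    HasSum (fun p : List Bool => F (node q p)) (phi q) := by
  apply hasSum_of_isLUB_of_nonneg
  · intro p
    exact F_nonneg (memH_node hq p)
  constructor
  · rintro x ⟨s, rfl⟩
    have hsub : s ⊆ ball (s.sup List.length + 1) := by
      intro p hp
      rw [mem_ball_iff]
      exact Nat.lt_succ_of_le (Finset.le_sup hp)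
    calc ∑ p ∈ s, F (node q p)
        ≤ ∑ p ∈ ball (s.sup List.length + 1), F (node q p) :=
          Finset.sum_le_sum_of_subset_of_nonneg hsub
            (fun p _ _ => F_nonneg (memH_node hq p))
      _ ≤ phi q := by
          have h1 := tele hq (s.sup List.length + 1)
          have h2 : 0 ≤ ∑ p ∈ paths (s.sup List.length + 1), phi (node q p) :=
            Finset.sum_nonneg fun p _ => phi_nonneg (memH_node hq p)
          linarith
  · intro u hu
    have hb : ∀ N : ℕ, phi q ≤ u +
        (1/((N:ℝ)+1) * (1/((q.1:ℝ)*(q.2.2.1:ℝ)))) * (1/((q.2.1:ℝ)*(q.2.2.2:ℝ))) := by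
      intro N
      have h1 : ∑ p ∈ ball N, F (node q p) ≤ u := hu ⟨ball N, rfl⟩
      have h2 := tele hq N
      have h3 := tail_le hq N
      linarith
    have hc : Tendsto (fun N : ℕ => u +
        (1/((N:ℝ)+1) * (1/((q.1:ℝ)*(q.2.2.1:ℝ)))) * (1/((q.2.1:ℝ)*(q.2.2.2:ℝ))))
        atTop (nhds u) := by
      have h0 : Tendsto (fun N : ℕ => 1/((N:ℝ)+1)) atTop (nhds 0) :=
        tendsto_one_div_add_atTop_nhds_zero_nat
      have h4 := ((h0.mul_const ((1:ℝ)/((q.1:ℝ)*(q.2.2.1:ℝ)))).mul_const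
        ((1:ℝ)/((q.2.1:ℝ)*(q.2.2.2:ℝ)))).const_add u
      simpa using h4
    exact ge_of_tendsto' hc hb

lemma harm_cast (N : ℕ) : (harmonic N : ℝ) = ∑ n ∈ Finset.range N, ((n:ℝ)+1)⁻¹ := by
  rw [harmonic]
  push_cast
  rfl

lemma phi_root (n : ℕ) : phi (root n) =
    ((n:ℝ)+1)⁻¹ + ((n:ℝ)+2)⁻¹ - 2*(Real.log ((n:ℝ)+2) - Real.log ((n:ℝ)+1)) := by
  have h1 : phi (root n) = hfun ((n:ℝ)+1) := by
    rw [root, phi]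
    congr 1
    push_cast
    ring
  rw [h1, hfun, show ((n:ℝ)+1+1) = (n:ℝ)+2 by ring,
    Real.log_div (by positivity) (by positivity), one_div, one_div]

open Filter in
lemma hasSum_roots :
    HasSum (fun n : ℕ => phi (root n)) (2 * Real.eulerMascheroniConstant - 1) := by
  rw [hasSum_iff_tendsto_nat_of_nonneg (fun n => phi_nonneg (memH_root n))]
  have hsum : ∀ N : ℕ, ∑ n ∈ Finset.range N, phi (root n)
      = (((harmonic N : ℝ)) - Real.log ((N:ℝ)+1))
        + (((harmonic (N+1) : ℝ)) - Real.log (((N+1:ℕ):ℝ)+1))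
        + (Real.log (((N+1:ℕ):ℝ)+1) - Real.log ((N:ℝ)+1)) - 1 := by
    intro N
    have e2 : ∑ n ∈ Finset.range N, ((n:ℝ)+2)⁻¹ = (harmonic (N+1) : ℝ) - 1 := by
      rw [harm_cast (N+1), Finset.sum_range_succ' (fun i => ((i:ℝ)+1)⁻¹) N]
      have : ∀ n ∈ Finset.range N, (((n+1:ℕ):ℝ)+1)⁻¹ = ((n:ℝ)+2)⁻¹ := by
        intro n _
        push_cast
        ring_nf
      rw [Finset.sum_congr rfl this]
      norm_num
    have e3 : ∑ n ∈ Finset.range N, (Real.log ((n:ℝ)+2) - Real.log ((n:ℝ)+1))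
        = Real.log ((N:ℝ)+1) - Real.log ((0:ℝ)+1) := by
      have h := Finset.sum_range_sub (f := fun n : ℕ => Real.log ((n:ℝ)+1)) N
      have hc : ∀ n ∈ Finset.range N,
          (Real.log ((n:ℝ)+2) - Real.log ((n:ℝ)+1))
            = Real.log (((n+1:ℕ):ℝ)+1) - Real.log ((n:ℝ)+1) := by
        intro n _
        push_cast
        ring_nf
      rw [Finset.sum_congr rfl hc, h]
      norm_num
    simp only [phi_root]
    rw [Finset.sum_sub_distrib, Finset.sum_add_distrib, ← Finset.mul_sum, e2, e3,
      ← harm_cast N]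
    push_cast
    rw [show ((0:ℝ)+1) = 1 by ring, Real.log_one]
    ring
  have t1 := Real.tendsto_harmonic_sub_log_add_one
  have t2 : Tendsto (fun N : ℕ => (harmonic (N+1):ℝ) - Real.log (((N+1:ℕ):ℝ)+1)) atTop
      (nhds Real.eulerMascheroniConstant) := t1.comp (tendsto_add_atTop_nat 1)
  have t3 : Tendsto (fun N : ℕ => Real.log (((N+1:ℕ):ℝ)+1) - Real.log ((N:ℝ)+1)) atTop
      (nhds 0) := by
    apply squeeze_zero (g := fun N : ℕ => 1/((N:ℝ)+1))
    · intro N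
      have : Real.log ((N:ℝ)+1) ≤ Real.log (((N+1:ℕ):ℝ)+1) := by
        apply Real.log_le_log (by positivity)
        push_cast
        linarith
      linarith
    · intro N
      have hpos : (0:ℝ) < ((N:ℝ)+1) := by positivity
      have h := Real.log_le_sub_one_of_pos
        (x := (((N+1:ℕ):ℝ)+1)/((N:ℝ)+1)) (by positivity)
      rw [Real.log_div (by positivity) (by positivity)] at h
      have heq : (((N+1:ℕ):ℝ)+1)/((N:ℝ)+1) - 1 = 1/((N:ℝ)+1) := by
        push_cast
        field_simp
        ring
      linarith
    · exact tendsto_one_div_add_atTop_nhds_zero_nat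
  have comb := (((t1.add t2).add t3).sub_const 1)
  have heq : Real.eulerMascheroniConstant + Real.eulerMascheroniConstant + 0 - 1
      = 2 * Real.eulerMascheroniConstant - 1 := by ring
  rw [heq] at comb
  exact Tendsto.congr (fun N => (hsum N).symm) comb

noncomputable def eqv : (ℕ × List Bool) ≃ H :=
  Equiv.ofBijective (fun np => ⟨node (root np.1) np.2, memH_node (memH_root np.1) np.2⟩)
    (by
      constructor
      · rintro ⟨n₁, p₁⟩ ⟨n₂, p₂⟩ h
        simp only [Subtype.mk.injEq] at h
        obtain ⟨hn, hp⟩ := node_inj p₁ p₂ n₁ n₂ h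
        simp [hn, hp]
      · rintro ⟨q, hq⟩
        obtain ⟨n, p, h⟩ := surj_aux (q.2.1 + q.2.2.2).natAbs q hq le_rfl
        exact ⟨(n, p), Subtype.ext h⟩)

end Hata

open Hata in
theorem stmt_18 :
    HasSum
      (fun p : H =>
        1 / ((p.val.1 : ℝ) * (p.val.2.1 : ℝ) * (p.val.2.2.1 : ℝ) * (p.val.2.2.2 : ℝ) *
          ((p.val.1 : ℝ) + (p.val.2.2.1 : ℝ)) * ((p.val.2.1 : ℝ) + (p.val.2.2.2 : ℝ))))
      (2 * Real.eulerMascheroniConstant - 1) := by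
  rw [← Equiv.hasSum_iff eqv]
  have hcomp : ((fun p : H =>
      1 / ((p.val.1 : ℝ) * (p.val.2.1 : ℝ) * (p.val.2.2.1 : ℝ) * (p.val.2.2.2 : ℝ) *
        ((p.val.1 : ℝ) + (p.val.2.2.1 : ℝ)) * ((p.val.2.1 : ℝ) + (p.val.2.2.2 : ℝ)))) ∘ eqv)
      = fun np : ℕ × List Bool => F (node (root np.1) np.2) := rfl
  rw [hcomp]
  have hfib : ∀ n : ℕ, HasSum (fun p => F (node (root n) p)) (phi (root n)) :=
    fun n => hasSum_fiber (memH_root n)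
  have hsummable : Summable (fun np : ℕ × List Bool => F (node (root np.1) np.2)) := by
    rw [summable_prod_of_nonneg (fun np => F_nonneg (memH_node (memH_root np.1) np.2))]
    exact ⟨fun n => (hfib n).summable,
      hasSum_roots.summable.congr (fun n => ((hfib n).tsum_eq).symm)⟩
  have h1 := hsummable.hasSum
  have h2 := h1.prod_fiberwise hfib
  have h3 := h2.unique hasSum_roots
  rw [← h3]
  exact h1
end
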